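/- With ζ(m,δ) = |Q(m,δ)| counting δ-deviation sets of size m, one has ζ(m,2) = 3^⌊(m−1)/2⌋ for all m ≥ 1. -/

import Mathlib

def Pw : ℤ → List ℕ → Prop
  | s, [] => |s| ≤ 1
  | s, a :: γ => 0 < a ∧ |s + (a : ℤ)| ≤ 2 ∧ Pw (-(s + (a : ℤ))) γ

def Dv : ℕ → ℤ → Finset (List ℕ)
  | 0, s => if |s| ≤ 1 then {([] : List ℕ)} else ∅
  | (m+1), s =>
    (((Finset.Icc 1 (m+1)).filter (fun a : ℕ => |s + (a:ℤ)| ≤ 2)).attach).biUnion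
      (fun a => (Dv (m+1-a.1) (-(s+(a.1:ℤ)))).image (a.1 :: ·))
  decreasing_by
    have := a.2
    simp only [Finset.mem_filter, Finset.mem_Icc] at this
    omega

lemma Dv_card_succ (m : ℕ) (s : ℤ) :
    (Dv (m+1) s).card
      = ∑ a ∈ (Finset.Icc 1 (m+1)).filter (fun a : ℕ => |s + (a:ℤ)| ≤ 2),
          (Dv (m+1-a) (-(s+(a:ℤ)))).card := by
  rw [Dv]
  rw [Finset.card_biUnion]
  · rw [← Finset.sum_attach ((Finset.Icc 1 (m+1)).filter (fun a : ℕ => |s + (a:ℤ)| ≤ 2))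
      (fun a => (Dv (m+1-a) (-(s+(a:ℤ)))).card)]
    refine Finset.sum_congr rfl fun a _ => ?_
    exact Finset.card_image_of_injective _ (fun x y h => by injection h)
  · intro a _ b _ hab
    refine Finset.disjoint_left.mpr ?_
    rintro x hx hy
    simp only [Finset.mem_image] at hx hy
    obtain ⟨u, -, hu⟩ := hx
    obtain ⟨v, -, hv⟩ := hy
    apply hab
    apply Subtype.ext
    have := hu.trans hv.symm
    injection this

lemma mem_Dv : ∀ (γ : List ℕ) (m : ℕ) (s : ℤ), γ ∈ Dv m s ↔ (Pw s γ ∧ γ.sum = m) := by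
  intro γ
  induction γ with
  | nil =>
    intro m s
    cases m with
    | zero =>
      rw [Dv]
      split <;> simp_all [Pw]
    | succ m =>
      rw [Dv]
      simp [Pw]
  | cons a γ ih =>
    intro m s
    cases m with
    | zero =>
      rw [Dv]
      constructor
      · intro h
        split at h <;> simp_all
      · rintro ⟨⟨ha, -, -⟩, hsum⟩
        simp at hsum
        omega
    | succ m =>
      rw [Dv]
      simp only [Finset.mem_biUnion, Finset.mem_attach, Finset.mem_image, true_and,
        Subtype.exists, Finset.mem_filter, Finset.mem_Icc]
      constructor
      · rintro ⟨b, ⟨⟨hb1, hb2⟩, hb3⟩, x, hx, hbx⟩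
        obtain ⟨rfl, rfl⟩ : b = a ∧ x = γ := by
          constructor <;> injection hbx <;> simp_all
        rw [ih] at hx
        refine ⟨⟨by omega, hb3, hx.1⟩, ?_⟩
        simp only [List.sum_cons]
        omega
      · rintro ⟨⟨ha, habs, hp⟩, hsum⟩
        simp only [List.sum_cons] at hsum
        refine ⟨a, ⟨⟨by omega, by omega⟩, habs⟩, γ, ?_, rfl⟩
        rw [ih]
        exact ⟨hp, by omega⟩

def Sal (α : List ℕ) (k : ℕ) : ℤ := ∑ i ∈ Finset.range k, (-1 : ℤ) ^ i * (α.getD i 0 : ℤ)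

lemma Sal_zero (α : List ℕ) : Sal α 0 = 0 := by simp [Sal]

lemma Sal_nil (k : ℕ) : Sal [] k = 0 := by simp [Sal]

lemma Sal_cons (a : ℕ) (γ : List ℕ) (k : ℕ) : Sal (a :: γ) (k+1) = (a : ℤ) - Sal γ k := by
  rw [Sal, Finset.sum_range_succ']
  have h1 : ∀ i, (-1:ℤ)^(i+1) * (((a :: γ).getD (i+1) 0 : ℕ) : ℤ)
      = -((-1:ℤ)^i * ((γ.getD i 0 : ℕ) : ℤ)) := by
    intro i
    rw [List.getD_cons_succ, pow_succ]
    ring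
  rw [Finset.sum_congr rfl (fun i _ => h1 i), Finset.sum_neg_distrib]
  simp [Sal]
  ring

lemma Sal_of_le (α : List ℕ) (k : ℕ) (h : α.length ≤ k) : Sal α k = Sal α α.length := by
  induction k with
  | zero =>
    have : α.length = 0 := by omega
    rw [this]
  | succ k ih =>
    rcases Nat.lt_or_ge α.length (k+1) with h' | h'
    · have hk : α.length ≤ k := by omega
      rw [Sal, Finset.sum_range_succ, List.getD_eq_default _ _ (by omega)]
      simp only [Nat.cast_zero, mul_zero, add_zero]
      exact ih hk
    · have : α.length = k + 1 := by omega
      rw [this]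

lemma Pw_iff : ∀ (γ : List ℕ) (s : ℤ), |s| ≤ 2 →
    (Pw s γ ↔ ((∀ a ∈ γ, 0 < a) ∧ |s + Sal γ γ.length| ≤ 1 ∧ ∀ k ≤ γ.length, |s + Sal γ k| ≤ 2)) := by
  intro γ
  induction γ with
  | nil =>
    intro s hs
    simp only [Pw, List.length_nil, Sal_nil, add_zero]
    constructor
    · intro h
      exact ⟨by simp, h, fun k _ => hs⟩
    · rintro ⟨-, h, -⟩
      exact h
  | cons a γ ih =>
    intro s hs
    have key : ∀ k, s + Sal (a :: γ) (k+1) = -(-(s + (a:ℤ)) + Sal γ k) := by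
      intro k
      rw [Sal_cons]
      ring
    constructor
    · rintro ⟨ha, habs, hp⟩
      rw [ih (-(s + (a:ℤ))) (by rwa [abs_neg])] at hp
      obtain ⟨hpos, hend, hall⟩ := hp
      refine ⟨?_, ?_, ?_⟩
      · intro b hb
        rcases List.mem_cons.mp hb with rfl | hb
        · exact ha
        · exact hpos b hb
      · rw [List.length_cons, key, abs_neg]
        exact hend
      · intro k hk
        cases k with
        | zero => simpa [Sal_zero] using hs
        | succ j =>
          rw [key, abs_neg]
          exact hall j (by simpa using hk)
    · rintro ⟨hpos, hend, hall⟩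
      have ha : 0 < a := hpos a List.mem_cons_self
      have h1 : |s + (a:ℤ)| ≤ 2 := by
        have h := hall 1 (by simp)
        rw [show s + Sal (a :: γ) 1 = s + (a:ℤ) from by
          rw [show (1:ℕ) = 0 + 1 from rfl, Sal_cons, Sal_zero]; ring] at h
        exact h
      refine ⟨ha, h1, ?_⟩
      rw [ih (-(s + (a:ℤ))) (by rwa [abs_neg])]
      refine ⟨fun b hb => hpos b (List.mem_cons_of_mem a hb), ?_, ?_⟩
      · rw [List.length_cons] at hend
        rw [key, abs_neg] at hend
        exact hend
      · intro k hk
        have := hall (k+1) (by simp; omega)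
        rwa [key, abs_neg] at this

lemma Dv_zero (s : ℤ) : (Dv 0 s).card = if |s| ≤ 1 then 1 else 0 := by
  rw [Dv]
  split <;> simp

lemma filt_eq (m : ℕ) (s : ℤ) (t : Finset ℕ)
    (h : ∀ a : ℕ, ((1 ≤ a ∧ a ≤ m+1) ∧ (-2 ≤ s + (a:ℤ) ∧ s + (a:ℤ) ≤ 2)) ↔ a ∈ t) :
    (Finset.Icc 1 (m+1)).filter (fun a : ℕ => |s + (a:ℤ)| ≤ 2) = t := by
  ext a
  rw [Finset.mem_filter, Finset.mem_Icc, abs_le, ← h a]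

lemma rec_s2 (m : ℕ) : (Dv (m+1) 2).card = 0 := by
  rw [Dv_card_succ, filt_eq m 2 ∅ (by intro a; simp; omega)]
  simp

lemma rec_s1 (m : ℕ) : (Dv (m+1) 1).card = (Dv m (-2)).card := by
  rw [Dv_card_succ, filt_eq m 1 {1} (by intro a; simp; omega)]
  norm_num

lemma rec_s0 (m : ℕ) : (Dv (m+2) 0).card = (Dv (m+1) (-1)).card + (Dv m (-2)).card := by
  rw [show m+2 = (m+1)+1 from rfl, Dv_card_succ, filt_eq (m+1) 0 {1, 2} (by intro a; simp; omega)]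
  rw [Finset.sum_insert (by decide), Finset.sum_singleton]
  norm_num
  rfl

lemma rec_s0' : (Dv 1 0).card = (Dv 0 (-1)).card := by
  rw [Dv_card_succ, filt_eq 0 0 {1} (by intro a; simp; omega)]
  norm_num

lemma rec_sm1 (m : ℕ) :
    (Dv (m+3) (-1)).card = (Dv (m+2) 0).card + (Dv (m+1) (-1)).card + (Dv m (-2)).card := by
  rw [show m+3 = (m+2)+1 from rfl, Dv_card_succ,
    filt_eq (m+2) (-1) {1, 2, 3} (by intro a; simp; omega)]
  rw [Finset.sum_insert (by decide), Finset.sum_insert (by decide), Finset.sum_singleton]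
  norm_num [add_assoc]
  rfl

lemma rec_sm1' : (Dv 1 (-1)).card = (Dv 0 0).card := by
  rw [Dv_card_succ, filt_eq 0 (-1) {1} (by intro a; simp; omega)]
  norm_num

lemma rec_sm1'' : (Dv 2 (-1)).card = (Dv 1 0).card + (Dv 0 (-1)).card := by
  rw [show (2:ℕ) = 1+1 from rfl, Dv_card_succ, filt_eq 1 (-1) {1, 2} (by intro a; simp; omega)]
  rw [Finset.sum_insert (by decide), Finset.sum_singleton]
  norm_num

lemma rec_sm2 (m : ℕ) :
    (Dv (m+4) (-2)).card
      = (Dv (m+3) 1).card + (Dv (m+2) 0).card + (Dv (m+1) (-1)).card + (Dv m (-2)).card := by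
  rw [show m+4 = (m+3)+1 from rfl, Dv_card_succ,
    filt_eq (m+3) (-2) {1, 2, 3, 4} (by intro a; simp; omega)]
  rw [Finset.sum_insert (by decide), Finset.sum_insert (by decide),
    Finset.sum_insert (by decide), Finset.sum_singleton]
  norm_num [add_assoc]
  rfl

lemma rec_sm2' : (Dv 1 (-2)).card = (Dv 0 1).card := by
  rw [Dv_card_succ, filt_eq 0 (-2) {1} (by intro a; simp; omega)]
  norm_num

lemma rec_sm2'' : (Dv 2 (-2)).card = (Dv 1 1).card + (Dv 0 0).card := by
  rw [show (2:ℕ) = 1+1 from rfl, Dv_card_succ, filt_eq 1 (-2) {1, 2} (by intro a; simp; omega)]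
  rw [Finset.sum_insert (by decide), Finset.sum_singleton]
  norm_num

lemma rec_sm2''' : (Dv 3 (-2)).card = (Dv 2 1).card + (Dv 1 0).card + (Dv 0 (-1)).card := by
  rw [show (3:ℕ) = 2+1 from rfl, Dv_card_succ, filt_eq 2 (-2) {1, 2, 3} (by intro a; simp; omega)]
  rw [Finset.sum_insert (by decide), Finset.sum_insert (by decide), Finset.sum_singleton]
  norm_num [add_assoc]

/-- `α` is a `δ`-deviation set of size `m`: a finite sequence of positive integers
summing to `m`, whose total alternating sum has absolute value at most `1`,
and all of whose partial alternating sums have absolute value at most `δ`. -/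
def IsDevSet (m δ : ℕ) (α : List ℕ) : Prop :=
  (∀ a ∈ α, 0 < a) ∧ α.sum = m ∧
  |∑ i ∈ Finset.range α.length, (-1 : ℤ) ^ i * (α.getD i 0 : ℤ)| ≤ 1 ∧
  ∀ k : ℕ, |∑ i ∈ Finset.range k, (-1 : ℤ) ^ i * (α.getD i 0 : ℤ)| ≤ (δ : ℤ)

/-- `zeta m δ` is the number of `δ`-deviation sets of size `m`. -/
noncomputable def zeta (m δ : ℕ) : ℕ := Nat.card {α : List ℕ // IsDevSet m δ α}

lemma isDevSet_iff (m : ℕ) (α : List ℕ) : IsDevSet m 2 α ↔ α ∈ Dv m 0 := by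
  rw [mem_Dv, Pw_iff α 0 (by norm_num)]
  unfold IsDevSet
  constructor
  · rintro ⟨hpos, hsum, hend, hall⟩
    refine ⟨⟨hpos, by simpa [Sal] using hend, fun k _ => ?_⟩, hsum⟩
    have := hall k
    simp only [Nat.cast_ofNat] at this
    simpa [Sal] using this
  · rintro ⟨⟨hpos, hend, hall⟩, hsum⟩
    refine ⟨hpos, hsum, by simpa [Sal] using hend, fun k => ?_⟩
    rcases le_or_gt k α.length with h | h
    · have := hall k h
      simp only [zero_add] at this
      simpa [Sal] using this
    · have heq : Sal α k = Sal α α.length := Sal_of_le α k (le_of_lt h)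
      have h1 : |(0:ℤ) + Sal α α.length| ≤ 1 := hend
      have : |Sal α k| ≤ 1 := by rw [heq]; simpa using h1
      calc |∑ i ∈ Finset.range k, (-1 : ℤ) ^ i * (α.getD i 0 : ℤ)| = |Sal α k| := rfl
        _ ≤ 1 := this
        _ ≤ ((2:ℕ) : ℤ) := by norm_num

-- base values
lemma c00 : (Dv 0 0).card = 1 := by rw [Dv_zero]; norm_num
lemma c0m1 : (Dv 0 (-1)).card = 1 := by rw [Dv_zero]; norm_num
lemma c01 : (Dv 0 1).card = 1 := by rw [Dv_zero]; norm_num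
lemma c0m2 : (Dv 0 (-2)).card = 0 := by rw [Dv_zero]; norm_num
lemma c10 : (Dv 1 0).card = 1 := by rw [rec_s0', c0m1]
lemma c1m1 : (Dv 1 (-1)).card = 1 := by rw [rec_sm1', c00]
lemma c1m2 : (Dv 1 (-2)).card = 1 := by rw [rec_sm2', c01]
lemma c11 : (Dv 1 1).card = 0 := by have := rec_s1 0; norm_num at this; rw [this, c0m2]
lemma c21 : (Dv 2 1).card = 1 := by have := rec_s1 1; norm_num at this; rw [this, c1m2]
lemma c20 : (Dv 2 0).card = 1 := by
  have := rec_s0 0; norm_num at this; rw [this, c1m1, c0m2]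
lemma c2m1 : (Dv 2 (-1)).card = 2 := by rw [rec_sm1'', c10, c0m1]
lemma c2m2 : (Dv 2 (-2)).card = 1 := by rw [rec_sm2'', c11, c00]
lemma c31 : (Dv 3 1).card = 1 := by have := rec_s1 2; norm_num at this; rw [this, c2m2]
lemma c30 : (Dv 3 0).card = 3 := by
  have := rec_s0 1; norm_num at this; rw [this, c2m1, c1m2]
lemma c3m1 : (Dv 3 (-1)).card = 2 := by
  have := rec_sm1 0; norm_num at this; rw [this, c20, c1m1, c0m2]
lemma c3m2 : (Dv 3 (-2)).card = 3 := by rw [rec_sm2''', c21, c10, c0m1]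
lemma c41 : (Dv 4 1).card = 3 := by have := rec_s1 3; norm_num at this; rw [this, c3m2]
lemma c40 : (Dv 4 0).card = 3 := by
  have := rec_s0 2; norm_num at this; rw [this, c3m1, c2m2]
lemma c4m1 : (Dv 4 (-1)).card = 6 := by
  have := rec_sm1 1; norm_num at this; rw [this, c30, c2m1, c1m2]
lemma c4m2 : (Dv 4 (-2)).card = 3 := by
  have := rec_sm2 0; norm_num at this; rw [this, c31, c20, c1m1, c0m2]
lemma c51 : (Dv 5 1).card = 3 := by have := rec_s1 4; norm_num at this; rw [this, c4m2]
lemma c50 : (Dv 5 0).card = 9 := by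
  have := rec_s0 3; norm_num at this; rw [this, c4m1, c3m2]
lemma c5m1 : (Dv 5 (-1)).card = 6 := by
  have := rec_sm1 2; norm_num at this; rw [this, c40, c3m1, c2m2]
lemma c5m2 : (Dv 5 (-2)).card = 9 := by
  have := rec_sm2 1; norm_num at this; rw [this, c41, c30, c2m1, c1m2]
lemma c61 : (Dv 6 1).card = 9 := by have := rec_s1 5; norm_num at this; rw [this, c5m2]
lemma c60 : (Dv 6 0).card = 9 := by
  have := rec_s0 4; norm_num at this; rw [this, c5m1, c4m2]
lemma c6m1 : (Dv 6 (-1)).card = 18 := by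
  have := rec_sm1 3; norm_num at this; rw [this, c50, c4m1, c3m2]
lemma c6m2 : (Dv 6 (-2)).card = 9 := by
  have := rec_sm2 2; norm_num at this; rw [this, c51, c40, c3m1, c2m2]

lemma main_ind (k : ℕ) :
    ((Dv (2*k+3) (-2)).card = 3^(k+1) ∧ (Dv (2*k+3) (-1)).card = 2*3^k ∧
     (Dv (2*k+3) 0).card = 3^(k+1) ∧ (Dv (2*k+3) 1).card = 3^k) ∧
    ((Dv (2*k+4) (-2)).card = 3^(k+1) ∧ (Dv (2*k+4) (-1)).card = 2*3^(k+1) ∧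
     (Dv (2*k+4) 0).card = 3^(k+1) ∧ (Dv (2*k+4) 1).card = 3^(k+1)) ∧
    ((Dv (2*k+5) (-2)).card = 3^(k+2) ∧ (Dv (2*k+5) (-1)).card = 2*3^(k+1) ∧
     (Dv (2*k+5) 0).card = 3^(k+2) ∧ (Dv (2*k+5) 1).card = 3^(k+1)) ∧
    ((Dv (2*k+6) (-2)).card = 3^(k+2) ∧ (Dv (2*k+6) (-1)).card = 2*3^(k+2) ∧
     (Dv (2*k+6) 0).card = 3^(k+2) ∧ (Dv (2*k+6) 1).card = 3^(k+2)) := by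
  induction k with
  | zero =>
    norm_num [c30, c31, c3m1, c3m2, c40, c41, c4m1, c4m2,
      c50, c51, c5m1, c5m2, c60, c61, c6m1, c6m2]
  | succ k ih =>
    obtain ⟨⟨h3m2, h3m1, h30, h31⟩, ⟨h4m2, h4m1, h40, h41⟩,
      ⟨h5m2, h5m1, h50, h51⟩, ⟨h6m2, h6m1, h60, h61⟩⟩ := ih
    have A1 : (Dv (2*k+7) 1).card = 3^(k+2) := by
      have e := rec_s1 (2*k+6)
      simp only [show 2*k+6+1 = 2*k+7 by omega] at e
      rw [e, h6m2]
    have A0 : (Dv (2*k+7) 0).card = 3^(k+3) := by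
      have e := rec_s0 (2*k+5)
      simp only [show 2*k+5+2 = 2*k+7 by omega, show 2*k+5+1 = 2*k+6 by omega] at e
      rw [e, h6m1, h5m2]; ring
    have Am1 : (Dv (2*k+7) (-1)).card = 2*3^(k+2) := by
      have e := rec_sm1 (2*k+4)
      simp only [show 2*k+4+3 = 2*k+7 by omega, show 2*k+4+2 = 2*k+6 by omega,
        show 2*k+4+1 = 2*k+5 by omega] at e
      rw [e, h60, h5m1, h4m2]; ring
    have Am2 : (Dv (2*k+7) (-2)).card = 3^(k+3) := by
      have e := rec_sm2 (2*k+3)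
      simp only [show 2*k+3+4 = 2*k+7 by omega, show 2*k+3+3 = 2*k+6 by omega,
        show 2*k+3+2 = 2*k+5 by omega, show 2*k+3+1 = 2*k+4 by omega] at e
      rw [e, h61, h50, h4m1, h3m2]; ring
    have B1 : (Dv (2*k+8) 1).card = 3^(k+3) := by
      have e := rec_s1 (2*k+7)
      simp only [show 2*k+7+1 = 2*k+8 by omega] at e
      rw [e, Am2]
    have B0 : (Dv (2*k+8) 0).card = 3^(k+3) := by
      have e := rec_s0 (2*k+6)
      simp only [show 2*k+6+2 = 2*k+8 by omega, show 2*k+6+1 = 2*k+7 by omega] at e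
      rw [e, Am1, h6m2]; ring
    have Bm1 : (Dv (2*k+8) (-1)).card = 2*3^(k+3) := by
      have e := rec_sm1 (2*k+5)
      simp only [show 2*k+5+3 = 2*k+8 by omega, show 2*k+5+2 = 2*k+7 by omega,
        show 2*k+5+1 = 2*k+6 by omega] at e
      rw [e, A0, h6m1, h5m2]; ring
    have Bm2 : (Dv (2*k+8) (-2)).card = 3^(k+3) := by
      have e := rec_sm2 (2*k+4)
      simp only [show 2*k+4+4 = 2*k+8 by omega, show 2*k+4+3 = 2*k+7 by omega,
        show 2*k+4+2 = 2*k+6 by omega, show 2*k+4+1 = 2*k+5 by omega] at e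
      rw [e, A1, h60, h5m1, h4m2]; ring
    simp only [show 2*(k+1)+3 = 2*k+5 by omega, show 2*(k+1)+4 = 2*k+6 by omega,
      show 2*(k+1)+5 = 2*k+7 by omega, show 2*(k+1)+6 = 2*k+8 by omega,
      show (k+1)+1 = k+2 by omega, show (k+1)+2 = k+3 by omega]
    exact ⟨⟨h5m2, h5m1, h50, h51⟩, ⟨h6m2, h6m1, h60, h61⟩,
      ⟨Am2, Am1, A0, A1⟩, ⟨Bm2, Bm1, B0, B1⟩⟩

lemma card_Dv_zero_state (m : ℕ) (hm : 1 ≤ m) : (Dv m 0).card = 3 ^ ((m - 1) / 2) := by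
  rcases Nat.lt_or_ge m 3 with h | h
  · interval_cases m
    · rw [c10]; norm_num
    · rw [c20]; norm_num
  · rcases Nat.even_or_odd m with ⟨j, hj⟩ | ⟨j, hj⟩
    · -- m even ≥ 4, m = 2k+4 with k = j-2
      obtain ⟨k, rfl⟩ : ∃ k, m = 2*k+4 := ⟨j - 2, by omega⟩
      have := (main_ind k).2.1.2.2.1
      rw [this]
      congr 1
      omega
    · rcases Nat.eq_or_lt_of_le h with h3 | h4
      · rw [← h3, c30]; norm_num
      · obtain ⟨k, rfl⟩ : ∃ k, m = 2*k+5 := ⟨j - 2, by omega⟩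
        have := (main_ind k).2.2.1.2.2.1
        rw [this]
        congr 1
        omega

/-- `ζ(m,2) = 3^⌊(m−1)/2⌋` for all `m ≥ 1`. -/
theorem zeta_two (m : ℕ) (hm : 1 ≤ m) : zeta m 2 = 3 ^ ((m - 1) / 2) := by
  have h1 : zeta m 2 = Nat.card {α : List ℕ // α ∈ Dv m 0} :=
    Nat.card_congr (Equiv.subtypeEquivRight fun α => isDevSet_iff m α)
  rw [h1, Nat.card_eq_fintype_card, Fintype.card_coe]
  exact card_Dv_zero_state m hm
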